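/- Every dependent set in a matroid (on a possibly infinite ground set, satisfying the Higgs/Bruhn et al. axioms) contains a minimal dependent set (a circuit). -/

import Mathlib

open Set

theorem stmt_15 {α : Type*} (M : Matroid α) {D : Set α}
    (hDE : D ⊆ M.E) (hD : ¬ M.Indep D) :
    ∃ C ⊆ D, ¬ M.Indep C ∧ ∀ C' ⊂ C, M.Indep C' := by
  obtain ⟨I, hI⟩ := M.exists_isBasis D
  have hIne : I ≠ D := fun h => hD (h ▸ hI.indep)
  obtain ⟨e, heD, heI⟩ : ∃ e ∈ D, e ∉ I := by
    by_contra h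
    push_neg at h
    exact hIne (hI.subset.antisymm h)
  set S : Set (Set α) := {J | J ⊆ I ∧ e ∈ M.closure J} with hS
  have hIS : I ∈ S := ⟨Subset.rfl, hI.subset_closure heD⟩
  have hne : S.Nonempty := ⟨I, hIS⟩
  set J₀ : Set α := ⋂₀ S with hJ₀
  have hJ₀I : J₀ ⊆ I := sInter_subset_of_mem hIS
  have hJ₀indep : M.Indep J₀ := hI.indep.subset hJ₀I
  have hcl : M.closure J₀ = ⋂ J ∈ S, M.closure J :=
    hI.indep.closure_sInter_eq_biInter_closure_of_forall_subset hne (fun J hJ => hJ.1)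
  have heJ₀ : e ∈ M.closure J₀ := by
    rw [hcl]
    exact mem_iInter₂.mpr fun J hJ => hJ.2
  have heJ₀' : e ∉ J₀ := fun h => heI (hJ₀I h)
  refine ⟨insert e J₀, insert_subset heD (hJ₀I.trans hI.subset), ?_, ?_⟩
  · exact (hJ₀indep.insert_dep_iff.mpr ⟨heJ₀, heJ₀'⟩).not_indep
  · intro C' hC'
    obtain ⟨x, hxC, hx⟩ : ∃ x ∈ insert e J₀, x ∉ C' := by
      by_contra h
      push_neg at h
      exact hC'.not_subset h
    have hC'sub : C' ⊆ insert e J₀ \ {x} :=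
      subset_diff_singleton hC'.subset hx
    rcases hxC with rfl | hxJ
    · refine hJ₀indep.subset fun a ha => ?_
      obtain ⟨h1, h2⟩ := hC'sub ha
      rcases h1 with rfl | h1
      · exact absurd rfl h2
      · exact h1
    · have hsub : insert e J₀ \ {x} ⊆ insert e (J₀ \ {x}) := by
        intro a ⟨ha, hax⟩
        rcases ha with rfl | ha
        · exact mem_insert _ _
        · exact mem_insert_of_mem _ ⟨ha, hax⟩
      have hxe : e ∉ J₀ \ {x} := fun h => heJ₀' h.1
      have hnotcl : e ∉ M.closure (J₀ \ {x}) := by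
        intro hcontra
        have : J₀ \ {x} ∈ S := ⟨(diff_subset).trans hJ₀I, hcontra⟩
        exact (sInter_subset_of_mem this hxJ).2 rfl
      have hind : M.Indep (insert e (J₀ \ {x})) := by
        rw [(hJ₀indep.subset diff_subset).insert_indep_iff_of_notMem hxe]
        exact ⟨hDE heD, hnotcl⟩
      exact hind.subset (hC'sub.trans hsub)
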